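/- arXiv:2411.16584 — 2 statements merged into one kernel-verified Lean document; each statement's English description precedes it below -/
import Mathlib

section
/- Let T be a nondegenerate triangle in ℝ² with vertices v₁, v₂, v₃, and let χ be a polynomial of total degree at most 1. Then for every 1 ≤ p < ∞, (1/3) ∫_T |χ|^p ≤ (A_T/3)(|χ(v₁)|^p + |χ(v₂)|^p + |χ(v₃)|^p) ≤ C ∫_T |χ|^p, where C > 0 is a constant depending only on p (not on T or χ). -/
open MeasureTheory
open Pointwise

/-- Marcinkiewicz–Zygmund inequality for the 3-point vertex rule on a
triangle and affine polynomials: for `1 ≤ p < ∞`, there is a constant `C > 0` depending only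
on `p` such that for every nondegenerate triangle `T` and every affine `χ`,
`(1/3)∫_T |χ|^p ≤ (A_T/3)(|χ(v₁)|^p + |χ(v₂)|^p + |χ(v₃)|^p) ≤ C ∫_T |χ|^p`. -/
theorem MZ_vertex_rule_triangle (p : ℝ) (hp : 1 ≤ p) :
    ∃ C : ℝ, 0 < C ∧
      ∀ (v : Fin 3 → ℝ × ℝ), AffineIndependent ℝ v →
      ∀ χ : ℝ × ℝ → ℝ, (∃ a c e : ℝ, ∀ q : ℝ × ℝ, χ q = a * q.1 + c * q.2 + e) →
        (1 / 3) * (∫ q in convexHull ℝ (Set.range v), |χ q| ^ p)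
            ≤ ((volume (convexHull ℝ (Set.range v))).toReal / 3) *
                (|χ (v 0)| ^ p + |χ (v 1)| ^ p + |χ (v 2)| ^ p) ∧
        ((volume (convexHull ℝ (Set.range v))).toReal / 3) *
                (|χ (v 0)| ^ p + |χ (v 1)| ^ p + |χ (v 2)| ^ p)
            ≤ C * ∫ q in convexHull ℝ (Set.range v), |χ q| ^ p := by
  have hp0 : (0:ℝ) < p := lt_of_lt_of_le one_pos hp
  have h2p : (0:ℝ) < 2 ^ p := Real.rpow_pos_of_pos (by norm_num) p
  refine ⟨16 * 2 ^ p, by positivity, ?_⟩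
  intro v _hv χ hχ
  obtain ⟨a, c, e, hχ⟩ := hχ
  have hχ' : χ = fun q : ℝ × ℝ => a * q.1 + c * q.2 + e := funext hχ
  subst hχ'
  set χ : ℝ × ℝ → ℝ := fun q : ℝ × ℝ => a * q.1 + c * q.2 + e with hχdef
  set T := convexHull ℝ (Set.range v) with hTdef
  have hTconv : Convex ℝ T := convex_convexHull _ _
  have hTcpt : IsCompact T := (Set.finite_range v).isCompact_convexHull ℝ
  have hTmeas : MeasurableSet T := hTcpt.measurableSet
  have hTfin : volume T ≠ ⊤ := hTcpt.measure_lt_top.ne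
  set A := (volume T).toReal with hAdef
  -- affinity of χ
  have haff : ∀ (s t : ℝ) (x y : ℝ × ℝ), s + t = 1 →
      χ (s • x + t • y) = s * χ x + t * χ y := by
    intro s t x y hst
    have ht' : t = 1 - s := by linarith
    subst ht'
    simp only [hχdef, Prod.fst_add, Prod.snd_add, Prod.smul_fst, Prod.smul_snd, smul_eq_mul]
    ring
  -- max vertex
  obtain ⟨m, hm⟩ := Finite.exists_max (fun i : Fin 3 => |χ (v i)|)
  set M := |χ (v m)| with hMdef
  have hM0 : 0 ≤ M := abs_nonneg _
  -- pointwise bound on T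
  have hbound : ∀ q ∈ T, |χ q| ≤ M := by
    have hsub : T ⊆ {x : ℝ × ℝ | |χ x| ≤ M} := by
      apply convexHull_min
      · rintro _ ⟨i, rfl⟩; exact hm i
      · intro x hx y hy s t hs ht hst
        simp only [Set.mem_setOf_eq] at hx hy ⊢
        rw [haff s t x y hst]
        calc |s * χ x + t * χ y| ≤ |s * χ x| + |t * χ y| := abs_add_le _ _
          _ = s * |χ x| + t * |χ y| := by
              rw [abs_mul, abs_mul, abs_of_nonneg hs, abs_of_nonneg ht]
          _ ≤ s * M + t * M :=
              add_le_add (mul_le_mul_of_nonneg_left hx hs)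
                (mul_le_mul_of_nonneg_left hy ht)
          _ = M := by rw [← add_mul, hst, one_mul]
    exact fun q hq => hsub hq
  have hnn : ∀ q : ℝ × ℝ, 0 ≤ |χ q| ^ p := fun q => Real.rpow_nonneg (abs_nonneg _) p
  -- continuity and integrability
  have hcont : Continuous fun q : ℝ × ℝ => |χ q| ^ p := by
    have h1 : Continuous fun q : ℝ × ℝ => |χ q| := by
      simp only [hχdef]; fun_prop
    have h2 : Continuous fun x : ℝ => x ^ p := by
      rw [continuous_iff_continuousAt]
      exact fun x => Real.continuousAt_rpow_const x p (Or.inr hp0.le)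
    exact h2.comp h1
  have hint : IntegrableOn (fun q => |χ q| ^ p) T volume :=
    hcont.continuousOn.integrableOn_compact hTcpt
  set S := |χ (v 0)| ^ p + |χ (v 1)| ^ p + |χ (v 2)| ^ p with hSdef
  have hMpS : M ^ p ≤ S := by
    have h0 := hnn (v 0); have h1 := hnn (v 1); have h2 := hnn (v 2)
    have hm3 : m = 0 ∨ m = 1 ∨ m = 2 := by omega
    rcases hm3 with rfl | rfl | rfl <;> simp only [hMdef, hSdef] <;> linarith
  have hSM : S ≤ 3 * M ^ p := by
    have l0 : |χ (v 0)| ^ p ≤ M ^ p :=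
      Real.rpow_le_rpow (abs_nonneg _) (hm 0) hp0.le
    have l1 : |χ (v 1)| ^ p ≤ M ^ p :=
      Real.rpow_le_rpow (abs_nonneg _) (hm 1) hp0.le
    have l2 : |χ (v 2)| ^ p ≤ M ^ p :=
      Real.rpow_le_rpow (abs_nonneg _) (hm 2) hp0.le
    simp only [hSdef]; linarith
  -- FIRST inequality
  have hI1 : (∫ q in T, |χ q| ^ p) ≤ A * S := by
    have hpw : ∀ q ∈ T, |χ q| ^ p ≤ S := by
      intro q hq
      exact le_trans (Real.rpow_le_rpow (abs_nonneg _) (hbound q hq) hp0.le) hMpS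
    calc (∫ q in T, |χ q| ^ p) ≤ ∫ _q in T, S :=
          setIntegral_mono_on hint
            (integrableOn_const hTcpt.measure_lt_top.ne) hTmeas hpw
      _ = A * S := by rw [setIntegral_const, smul_eq_mul]; rfl
  -- the small triangle near the max vertex
  set c0 : ℝ × ℝ := (3/4 : ℝ) • v m with hc0
  set T' : Set (ℝ × ℝ) := (fun x : ℝ × ℝ => c0 + (1/4 : ℝ) • x) '' T with hT'def
  have hT'cpt : IsCompact T' := hTcpt.image (by fun_prop)
  have hvm : v m ∈ T := subset_convexHull ℝ _ ⟨m, rfl⟩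
  have hT'sub : T' ⊆ T := by
    rintro _ ⟨x, hx, rfl⟩
    exact hTconv hvm hx (by norm_num) (by norm_num) (by norm_num)
  -- volume of T'
  have hvolT' : (volume T').toReal = A / 16 := by
    have h1 : T' = c0 +ᵥ ((1/4 : ℝ) • T) := by
      rw [hT'def, ← Set.image_smul, ← Set.image_vadd, Set.image_image]
      rfl
    rw [h1, measure_vadd, Measure.addHaar_smul]
    have hd : Module.finrank ℝ (ℝ × ℝ) = 2 := by
      simp [Module.finrank_prod]
    rw [hd, ENNReal.toReal_mul, ENNReal.toReal_ofReal (by positivity)]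
    rw [show |((1:ℝ)/4) ^ 2| = 1/16 by norm_num]
    rw [hAdef]; ring
  -- lower bound on T'
  have hlow : ∀ q ∈ T', (M / 2) ^ p ≤ |χ q| ^ p := by
    rintro _ ⟨x, hx, rfl⟩
    have hval : χ (c0 + (1/4 : ℝ) • x) = (3/4) * χ (v m) + (1/4) * χ x := by
      rw [hc0]; exact haff (3/4) (1/4) (v m) x (by norm_num)
    have hax : |χ x| ≤ M := hbound x hx
    have habs : M / 2 ≤ |χ (c0 + (1/4 : ℝ) • x)| := by
      rw [hval]
      have h1 : |(3/4 : ℝ) * χ (v m)| =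
          |((3/4) * χ (v m) + (1/4) * χ x) - (1/4) * χ x| := by ring_nf
      have h2 := abs_sub ((3/4 : ℝ) * χ (v m) + (1/4) * χ x) ((1/4 : ℝ) * χ x)
      rw [← h1] at h2
      rw [abs_mul] at h2
      rw [abs_mul] at h2
      rw [abs_of_nonneg (by norm_num : (0:ℝ) ≤ 3/4)] at h2
      rw [abs_of_nonneg (by norm_num : (0:ℝ) ≤ 1/4)] at h2
      rw [← hMdef] at h2
      linarith
    exact Real.rpow_le_rpow (by positivity) habs hp0.le
  have hI2 : (M / 2) ^ p * (A / 16) ≤ ∫ q in T, |χ q| ^ p := by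
    have hle : (M / 2) ^ p * (volume T').toReal ≤ ∫ q in T', |χ q| ^ p :=
      setIntegral_ge_of_const_le_real hT'cpt.measurableSet hT'cpt.measure_lt_top.ne hlow
        (hint.mono_set hT'sub)
    rw [hvolT'] at hle
    refine le_trans hle (setIntegral_mono_set hint (Filter.Eventually.of_forall ?_)
      (HasSubset.Subset.eventuallyLE hT'sub))
    exact fun q => hnn q
  constructor
  · have hring : A / 3 * S = 1 / 3 * (A * S) := by ring
    rw [hring]
    exact mul_le_mul_of_nonneg_left hI1 (by norm_num)
  · have key : A * M ^ p ≤ 16 * 2 ^ p * ∫ q in T, |χ q| ^ p := by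
      have hdiv : (M / 2) ^ p = M ^ p / 2 ^ p := Real.div_rpow hM0 (by norm_num : (0:ℝ) ≤ 2) p
      rw [hdiv] at hI2
      have heq : A * M ^ p = 16 * 2 ^ p * (M ^ p / 2 ^ p * (A / 16)) := by
        field_simp
      rw [heq]
      exact mul_le_mul_of_nonneg_left hI2 (by positivity)
    have hA0 : 0 ≤ A := ENNReal.toReal_nonneg
    have h1 : (A / 3) * S ≤ A * M ^ p := by
      have := mul_le_mul_of_nonneg_left hSM (by positivity : (0:ℝ) ≤ A / 3)
      calc (A / 3) * S ≤ (A / 3) * (3 * M ^ p) := this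
        _ = A * M ^ p := by ring
    linarith
end

section
/- Let Ω ⊂ ℝ² be a polygon and △ a triangulation with vertices {(xⱼ,yⱼ)}_{j=1}^m and mesh size |△|. Suppose for all polynomials χ ∈ ℙ_N: (i) on each T ∈ △, ‖χ‖_{∞,T} − K₁|T|²|χ|_{∞,2,T} ≤ max over vertices v of T of |χ(v)| ≤ ‖χ‖_{∞,T} + K₁|T|²|χ|_{∞,2,T}; and (ii) the Markov bounds |χ|_{∞,1,Ω} ≤ C₅N‖χ‖_{∞,Ω} and |χ|_{∞,2,Ω} ≤ C₅N²‖χ‖_{∞,Ω} hold. Then |max_{1≤j≤m}|χ(xⱼ,yⱼ)| − ‖χ‖_{∞,Ω}| ≤ C N² max{|△|, |△|²} ‖χ‖_{∞,Ω} for a constant C depending only on K₁ and C₅. In particular, for any η > 0, if N ≤ c min{|△|^{-1}, |△|^{-1/2}} η^{1/2} for a suitable constant c, then |max_j |χ(xⱼ,yⱼ)| − ‖χ‖_{∞,Ω}| ≤ η ‖χ‖_{∞,Ω}. -/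
open MvPolynomial

/-- Evaluation of a bivariate polynomial at a point of `ℝ²`. -/
noncomputable def evP (χ : MvPolynomial (Fin 2) ℝ) (p : ℝ × ℝ) : ℝ := eval ![p.1, p.2] χ

/-- Sup norm `‖g‖_{∞,S}` of a function over a set `S ⊆ ℝ²`. -/
noncomputable def supOn (g : ℝ × ℝ → ℝ) (S : Set (ℝ × ℝ)) : ℝ := ⨆ q : S, |g q|

/-- The semi-norm `|χ|_{∞,1,S}`: maximum of the sup norms of the first partial derivatives. -/
noncomputable def semiInf1 (χ : MvPolynomial (Fin 2) ℝ) (S : Set (ℝ × ℝ)) : ℝ :=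
  max (supOn (evP (pderiv 0 χ)) S) (supOn (evP (pderiv 1 χ)) S)

/-- The semi-norm `|χ|_{∞,2,S}`: maximum of the sup norms of the second partial derivatives. -/
noncomputable def semiInf2 (χ : MvPolynomial (Fin 2) ℝ) (S : Set (ℝ × ℝ)) : ℝ :=
  max (max (supOn (evP (pderiv 0 (pderiv 0 χ))) S) (supOn (evP (pderiv 0 (pderiv 1 χ))) S))
      (supOn (evP (pderiv 1 (pderiv 1 χ))) S)

/-- The `i`-th triangle of a triangulation. -/
noncomputable def TriP {m n : ℕ} (pts : Fin m → ℝ × ℝ) (idx : Fin n → Fin 3 → Fin m)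
    (i : Fin n) : Set (ℝ × ℝ) := convexHull ℝ (Set.range fun k => pts (idx i k))

/-- The triangulated polygon `Ω = ⋃ T`. -/
noncomputable def OmP {m n : ℕ} (pts : Fin m → ℝ × ℝ) (idx : Fin n → Fin 3 → Fin m) :
    Set (ℝ × ℝ) := ⋃ i, TriP pts idx i

/- Auxiliary lemmas -/

lemma evP_continuous (χ : MvPolynomial (Fin 2) ℝ) : Continuous (evP χ) := by
  have h1 : Continuous fun p : ℝ × ℝ => (![p.1, p.2] : Fin 2 → ℝ) := by
    refine continuous_pi fun i => ?_
    fin_cases i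
    · exact continuous_fst
    · exact continuous_snd
  exact (MvPolynomial.continuous_eval χ).comp h1

lemma supOn_nonneg (g : ℝ × ℝ → ℝ) (S : Set (ℝ × ℝ)) : 0 ≤ supOn g S :=
  Real.iSup_nonneg fun q => abs_nonneg _

lemma supOn_le {g : ℝ × ℝ → ℝ} {S : Set (ℝ × ℝ)} {a : ℝ} (ha : 0 ≤ a)
    (h : ∀ p ∈ S, |g p| ≤ a) : supOn g S ≤ a :=
  Real.iSup_le (fun q => h q q.2) ha

lemma bddAbove_evP {χ : MvPolynomial (Fin 2) ℝ} {S : Set (ℝ × ℝ)} (hS : IsCompact S) :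
    BddAbove (Set.range fun q : S => |evP χ q|) := by
  have hc : IsCompact ((fun p => |evP χ p|) '' S) :=
    hS.image ((evP_continuous χ).abs)
  have : (Set.range fun q : S => |evP χ q|) = (fun p => |evP χ p|) '' S := by
    ext x; simp [Set.mem_image]
  rw [this]
  exact hc.bddAbove

lemma le_supOn {χ : MvPolynomial (Fin 2) ℝ} {S : Set (ℝ × ℝ)} {p : ℝ × ℝ}
    (hS : IsCompact S) (hp : p ∈ S) : |evP χ p| ≤ supOn (evP χ) S :=
  le_ciSup (bddAbove_evP hS) (⟨p, hp⟩ : S)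

lemma supOn_mono {χ : MvPolynomial (Fin 2) ℝ} {S T : Set (ℝ × ℝ)} (hT : IsCompact T)
    (hST : S ⊆ T) : supOn (evP χ) S ≤ supOn (evP χ) T :=
  supOn_le (supOn_nonneg _ _) fun p hp => le_supOn hT (hST hp)

lemma semiInf2_nonneg (χ : MvPolynomial (Fin 2) ℝ) (S : Set (ℝ × ℝ)) :
    0 ≤ semiInf2 χ S :=
  le_trans (supOn_nonneg _ S) (le_max_right _ _)

lemma semiInf2_mono (χ : MvPolynomial (Fin 2) ℝ) {S T : Set (ℝ × ℝ)} (hT : IsCompact T)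
    (hST : S ⊆ T) : semiInf2 χ S ≤ semiInf2 χ T :=
  max_le_max (max_le_max (supOn_mono hT hST) (supOn_mono hT hST)) (supOn_mono hT hST)

lemma TriP_compact {m n : ℕ} (pts : Fin m → ℝ × ℝ) (idx : Fin n → Fin 3 → Fin m) (i : Fin n) :
    IsCompact (TriP pts idx i) :=
  (Set.finite_range _).isCompact_convexHull ℝ

lemma OmP_compact {m n : ℕ} (pts : Fin m → ℝ × ℝ) (idx : Fin n → Fin 3 → Fin m) :
    IsCompact (OmP pts idx) :=
  isCompact_iUnion fun i => TriP_compact pts idx i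

lemma vertex_mem_TriP {m n : ℕ} (pts : Fin m → ℝ × ℝ) (idx : Fin n → Fin 3 → Fin m)
    (i : Fin n) (k : Fin 3) : pts (idx i k) ∈ TriP pts idx i :=
  subset_convexHull ℝ _ ⟨k, rfl⟩

/-- `L^∞` Marcinkiewicz–Zygmund inequality on a triangulated polygon:
under the per-triangle two-sided bound (i) and the Markov bounds (ii), there is a constant
`C` depending only on `K₁, C₅` with
`| maxⱼ |χ(ptsⱼ)| − ‖χ‖_{∞,Ω} | ≤ C N² max{|△|, |△|²} ‖χ‖_{∞,Ω}`; in particular, for any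
`η > 0`, if `N ≤ c·min{|△|⁻¹, |△|^{-1/2}}·η^{1/2}` for a suitable constant `c`, then
`| maxⱼ |χ(ptsⱼ)| − ‖χ‖_{∞,Ω} | ≤ η ‖χ‖_{∞,Ω}`. -/
theorem MZ_inf_polygon (K₁ C₅ : ℝ) (hK₁ : 0 < K₁) (hC₅ : 0 < C₅) :
    ∃ C : ℝ, 0 < C ∧ ∃ c : ℝ, 0 < c ∧
      ∀ (m n : ℕ), 0 < m → 0 < n →
      ∀ (pts : Fin m → ℝ × ℝ) (idx : Fin n → Fin 3 → Fin m),
      (∀ i, AffineIndependent ℝ (fun k => pts (idx i k))) →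
      -- every sample point is a vertex of some triangle:
      (∀ j : Fin m, ∃ i k, idx i k = j) →
      ∀ (L : ℝ), 0 < L →
      ∀ (ℓ : Fin n → ℝ),
      -- `ℓ i` bounds the edges of triangle `i`, and the mesh size is `L`:
      (∀ i k k', dist (pts (idx i k)) (pts (idx i k')) ≤ ℓ i) →
      (∀ i, ℓ i ≤ L) →
      ∀ (N : ℕ) (χ : MvPolynomial (Fin 2) ℝ), χ.totalDegree ≤ N →
      -- hypothesis (i): the two-sided per-triangle bound
      (∀ i, supOn (evP χ) (TriP pts idx i) - K₁ * (ℓ i) ^ 2 * semiInf2 χ (TriP pts idx i)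
              ≤ (⨆ k : Fin 3, |evP χ (pts (idx i k))|) ∧
            (⨆ k : Fin 3, |evP χ (pts (idx i k))|)
              ≤ supOn (evP χ) (TriP pts idx i) + K₁ * (ℓ i) ^ 2 * semiInf2 χ (TriP pts idx i)) →
      -- hypothesis (ii): the Markov bounds on `Ω`
      semiInf1 χ (OmP pts idx) ≤ C₅ * N * supOn (evP χ) (OmP pts idx) →
      semiInf2 χ (OmP pts idx) ≤ C₅ * N ^ 2 * supOn (evP χ) (OmP pts idx) →
      (|(⨆ j : Fin m, |evP χ (pts j)|) - supOn (evP χ) (OmP pts idx)|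
          ≤ C * N ^ 2 * max L (L ^ 2) * supOn (evP χ) (OmP pts idx)) ∧
      (∀ η : ℝ, 0 < η →
        (N : ℝ) ≤ c * min (1 / L) (1 / Real.sqrt L) * Real.sqrt η →
        |(⨆ j : Fin m, |evP χ (pts j)|) - supOn (evP χ) (OmP pts idx)|
          ≤ η * supOn (evP χ) (OmP pts idx)) := by
  refine ⟨K₁ * C₅, by positivity, Real.sqrt (1 / (K₁ * C₅)), by positivity, ?_⟩
  intro m n hm hn pts idx _haff hcov L hL ℓ hedge hℓL N χ _hdeg hyp1 _hM1 hM2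
  have hΩc : IsCompact (OmP pts idx) := OmP_compact pts idx
  set M : ℝ := supOn (evP χ) (OmP pts idx) with hMdef
  set Maxj : ℝ := ⨆ j : Fin m, |evP χ (pts j)| with hMaxdef
  have hM0 : 0 ≤ M := supOn_nonneg _ _
  have hsub : ∀ i, TriP pts idx i ⊆ OmP pts idx := fun i => Set.subset_iUnion _ i
  have hℓ0 : ∀ i, 0 ≤ ℓ i := by
    intro i
    have := hedge i 0 0
    rwa [dist_self] at this
  have hs2T : ∀ i, semiInf2 χ (TriP pts idx i) ≤ C₅ * N ^ 2 * M :=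
    fun i => le_trans (semiInf2_mono χ hΩc (hsub i)) hM2
  have hs2T0 : ∀ i, 0 ≤ semiInf2 χ (TriP pts idx i) := fun i => semiInf2_nonneg χ _
  have hℓL2 : ∀ i, (ℓ i) ^ 2 ≤ L ^ 2 := fun i =>
    pow_le_pow_left₀ (hℓ0 i) (hℓL i) 2
  set B : ℝ := K₁ * L ^ 2 * (C₅ * N ^ 2 * M) with hBdef
  have hB0 : 0 ≤ B := by positivity
  have hKterm : ∀ i, K₁ * (ℓ i) ^ 2 * semiInf2 χ (TriP pts idx i) ≤ B := by
    intro i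
    have h1 := hs2T i
    have h2 := hs2T0 i
    have h3 := hℓL2 i
    have h4 := hℓ0 i
    have h5 : 0 ≤ C₅ * N ^ 2 * M := by positivity
    have h6 : K₁ * (ℓ i) ^ 2 * semiInf2 χ (TriP pts idx i) ≤ K₁ * L ^ 2 * (C₅ * N ^ 2 * M) :=
      mul_le_mul (mul_le_mul_of_nonneg_left h3 hK₁.le) h1 h2 (by positivity)
    rw [hBdef]
    exact h6
  -- upper bound : Maxj ≤ M + B
  have hupper : Maxj ≤ M + B := by
    rw [hMaxdef]
    refine Real.iSup_le (fun j => ?_) (by linarith)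
    obtain ⟨i, k, hik⟩ := hcov j
    have h1 : |evP χ (pts j)| ≤ ⨆ k : Fin 3, |evP χ (pts (idx i k))| := by
      rw [← hik]
      exact le_ciSup (f := fun k : Fin 3 => |evP χ (pts (idx i k))|)
        (Set.Finite.bddAbove (Set.finite_range _)) k
    have h2 := (hyp1 i).2
    have h3 : supOn (evP χ) (TriP pts idx i) ≤ M := supOn_mono hΩc (hsub i)
    have h4 := hKterm i
    linarith
  -- lower bound : M ≤ Maxj + B
  have hlower : M ≤ Maxj + B := by
    have hne : (OmP pts idx).Nonempty := by
      obtain ⟨i, k, _⟩ := hcov ⟨0, hm⟩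
      exact ⟨pts (idx i k), hsub i (vertex_mem_TriP pts idx i k)⟩
    obtain ⟨p, hpΩ, hpmax⟩ :=
      hΩc.exists_isMaxOn hne ((evP_continuous χ).abs.continuousOn)
    have hMle : M ≤ |evP χ p| :=
      Real.iSup_le (fun q => hpmax q.2) (abs_nonneg _)
    obtain ⟨i, hpT⟩ := Set.mem_iUnion.mp hpΩ
    have h1 := (hyp1 i).1
    have h2 : |evP χ p| ≤ supOn (evP χ) (TriP pts idx i) :=
      le_supOn (TriP_compact pts idx i) hpT
    have h3 : (⨆ k : Fin 3, |evP χ (pts (idx i k))|) ≤ Maxj := by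
      rw [hMaxdef]
      refine ciSup_le fun k => ?_
      exact le_ciSup (f := fun j : Fin m => |evP χ (pts j)|)
        (Set.Finite.bddAbove (Set.finite_range _)) (idx i k)
    have h4 := hKterm i
    linarith
  have habs : |Maxj - M| ≤ B := abs_sub_le_iff.mpr ⟨by linarith, by linarith⟩
  constructor
  · -- first claim
    refine le_trans habs ?_
    have hmaxL : L ^ 2 ≤ max L (L ^ 2) := le_max_right _ _
    have h5 : 0 ≤ K₁ * C₅ * (N : ℝ) ^ 2 * M := by positivity
    nlinarith [hK₁.le, hC₅.le, hM0, sq_nonneg (N : ℝ)]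
  · -- second claim
    intro η hη hN
    refine le_trans habs ?_
    set c : ℝ := Real.sqrt (1 / (K₁ * C₅)) with hcdef
    have hc0 : 0 ≤ c := Real.sqrt_nonneg _
    have hc2 : c ^ 2 = 1 / (K₁ * C₅) := Real.sq_sqrt (by positivity)
    have hη2 : Real.sqrt η ^ 2 = η := Real.sq_sqrt hη.le
    have hmin : min (1 / L) (1 / Real.sqrt L) ≤ 1 / L := min_le_left _ _
    have hN' : (N : ℝ) ≤ c * (1 / L) * Real.sqrt η := by
      refine le_trans hN ?_
      have : c * min (1 / L) (1 / Real.sqrt L) ≤ c * (1 / L) :=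
        mul_le_mul_of_nonneg_left hmin hc0
      exact mul_le_mul_of_nonneg_right this (Real.sqrt_nonneg _)
    have hN0 : (0 : ℝ) ≤ (N : ℝ) := Nat.cast_nonneg _
    have hNsq : (N : ℝ) ^ 2 ≤ (c * (1 / L) * Real.sqrt η) ^ 2 := by
      exact pow_le_pow_left₀ hN0 hN' 2
    have hNsq' : (N : ℝ) ^ 2 * L ^ 2 ≤ c ^ 2 * η := by
      have hL2 : (0 : ℝ) < L ^ 2 := by positivity
      have : (c * (1 / L) * Real.sqrt η) ^ 2 = c ^ 2 * η / L ^ 2 := by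
        rw [mul_pow, mul_pow, hη2]
        field_simp
      rw [this] at hNsq
      calc (N : ℝ) ^ 2 * L ^ 2 ≤ (c ^ 2 * η / L ^ 2) * L ^ 2 :=
            mul_le_mul_of_nonneg_right hNsq hL2.le
        _ = c ^ 2 * η := by field_simp
    have hBη : B ≤ η * M := by
      have hKC : K₁ * C₅ * ((N : ℝ) ^ 2 * L ^ 2) ≤ K₁ * C₅ * (c ^ 2 * η) :=
        mul_le_mul_of_nonneg_left hNsq' (by positivity)
      have hKCc : K₁ * C₅ * (c ^ 2 * η) = η := by
        rw [hc2]; field_simp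
      have : K₁ * L ^ 2 * (C₅ * (N : ℝ) ^ 2) ≤ η := by nlinarith
      calc B = K₁ * L ^ 2 * (C₅ * (N : ℝ) ^ 2) * M := by rw [hBdef]; ring
        _ ≤ η * M := mul_le_mul_of_nonneg_right this hM0
    exact hBη
end
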